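/- Let d ≥ 3 and let P be any subposet of 2^d \ {1} (the d-cube with its top element removed) containing the standard example S_d (realized in 2^d by sending a_i to the d-tuple with 1 in the i-th coordinate and 0 elsewhere, and b_i to the d-tuple with 0 in the i-th coordinate and 1 elsewhere); for example, P = S_d ∪ {0}. Then for any chain C, dim(P × C) = d = dim(P). -/

import Mathlib

universe u

/-- The order dimension of a poset: the least cardinal `κ` such that the partial
order is the intersection of `κ` linear orderings (each extending it). -/
noncomputable def orderDim (α : Type u) [PartialOrder α] : Cardinal.{u} :=
  sInf {κ : Cardinal.{u} | ∃ (ι : Type u) (r : ι → α → α → Prop),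
    (∀ i, IsLinearOrder α (r i)) ∧
    (∀ x y : α, x ≤ y ↔ ∀ i, r i x y) ∧
    Cardinal.mk ι = κ}

/-- The element `a_i` of the standard example, realized in the `d`-cube:
`1` in the `i`-th coordinate and `0` elsewhere. -/
def cubeA (d : ℕ) (i : Fin d) : Fin d → Bool := fun k => decide (k = i)

/-- The element `b_i` of the standard example, realized in the `d`-cube:
`0` in the `i`-th coordinate and `1` elsewhere. -/
def cubeB (d : ℕ) (i : Fin d) : Fin d → Bool := fun k => decide (k ≠ i)

/-- The standard example `S_d`, realized as a subset of the `d`-cube. -/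
def stdExSet (d : ℕ) : Set (Fin d → Bool) := Set.range (cubeA d) ∪ Set.range (cubeB d)

/-- If a poset embeds into a product of `d` linear orders, then `d` is in the
defining set of `orderDim`. -/
lemma dim_mem_of_embedding {α : Type} [PartialOrder α] {d : ℕ}
    {β : Fin d → Type} [∀ i, LinearOrder (β i)] (f : α → ∀ i, β i)
    (hf : ∀ x y : α, x ≤ y ↔ ∀ i, f x i ≤ f y i) :
    (d : Cardinal) ∈ {κ : Cardinal | ∃ (ι : Type) (r : ι → α → α → Prop),
      (∀ i, IsLinearOrder α (r i)) ∧
      (∀ x y : α, x ≤ y ↔ ∀ i, r i x y) ∧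
      Cardinal.mk ι = κ} := by
  refine ⟨Fin d, fun i x y => f x i < f y i ∨
    (f x i = f y i ∧ toLinearExtension x ≤ toLinearExtension y), ?_, ?_, by simp⟩
  · intro i
    have hinj : Function.Injective (toLinearExtension (α := α)) := fun a b h => h
    refine { refl := ?_, trans := ?_, antisymm := ?_, total := ?_ }
    · intro a; exact Or.inr ⟨rfl, le_refl _⟩
    · rintro a b c (h1 | ⟨h1, h1'⟩) (h2 | ⟨h2, h2'⟩)
      · exact Or.inl (h1.trans h2)
      · exact Or.inl (h2 ▸ h1)
      · exact Or.inl (h1 ▸ h2)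
      · exact Or.inr ⟨h1.trans h2, h1'.trans h2'⟩
    · rintro a b (h1 | ⟨h1, h1'⟩) (h2 | ⟨h2, h2'⟩)
      · exact absurd (h1.trans h2) (lt_irrefl _)
      · exact absurd (h2 ▸ h1) (lt_irrefl _)
      · exact absurd (h1 ▸ h2) (lt_irrefl _)
      · exact hinj (le_antisymm h1' h2')
    · intro a b
      rcases lt_trichotomy (f a i) (f b i) with h | h | h
      · exact Or.inl (Or.inl h)
      · rcases le_total (toLinearExtension a) (toLinearExtension b) with h' | h'
        · exact Or.inl (Or.inr ⟨h, h'⟩)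
        · exact Or.inr (Or.inr ⟨h.symm, h'⟩)
      · exact Or.inr (Or.inl h)
  · intro x y
    constructor
    · intro hxy i
      rcases lt_or_eq_of_le ((hf x y).mp hxy i) with h | h
      · exact Or.inl h
      · exact Or.inr ⟨h, toLinearExtension.monotone hxy⟩
    · intro h
      refine (hf x y).mpr fun i => ?_
      rcases h i with h' | ⟨h', _⟩
      · exact h'.le
      · exact h'.le

/-- Lower bound from a standard-example configuration. -/
lemma dim_lower {α : Type} [PartialOrder α] {d : ℕ} (A B : Fin d → α)
    (hAB : ∀ i j : Fin d, i ≠ j → A i ≤ B j) (hA : ∀ i, ¬ A i ≤ B i) :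
    ∀ κ ∈ {κ : Cardinal | ∃ (ι : Type) (r : ι → α → α → Prop),
      (∀ i, IsLinearOrder α (r i)) ∧
      (∀ x y : α, x ≤ y ↔ ∀ i, r i x y) ∧
      Cardinal.mk ι = κ}, (d : Cardinal) ≤ κ := by
  rintro κ ⟨ι, r, hlin, hiff, rfl⟩
  have ht : ∀ i : Fin d, ∃ l : ι, ¬ r l (A i) (B i) := by
    intro i
    by_contra h
    push_neg at h
    exact hA i ((hiff _ _).mpr h)
  choose t ht using ht
  by_cases hinj : Function.Injective t
  · simpa using Cardinal.mk_le_of_injective hinj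
  · exfalso
    rw [Function.Injective] at hinj
    push_neg at hinj
    obtain ⟨i, j, hij, hne⟩ := hinj
    set l := t i with hl
    have h1 : r l (A i) (B j) := (hiff _ _).mp (hAB i j hne) l
    have h2 : r l (B j) (A j) := by
      have := (hlin l).total (A j) (B j)
      rcases this with h | h
      · exact absurd h (hij ▸ ht j)
      · exact h
    have h3 : r l (A j) (B i) := (hiff _ _).mp (hAB j i (Ne.symm hne)) l
    have htr := (hlin l).trans
    exact ht i (htr _ _ _ (htr _ _ _ h1 h2) h3)

theorem stmt4 (d : ℕ) (hd : 3 ≤ d) (P : Set (Fin d → Bool))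
    (hSd : stdExSet d ⊆ P)
    (hP : P ⊆ {x | x ≠ (fun _ => true)})
    (C : Type) [LinearOrder C] [Nonempty C] :
    orderDim (↥P × C) = d ∧ orderDim ↥P = d := by
  obtain ⟨c₀⟩ := ‹Nonempty C›
  -- elements of the standard example, inside P
  have hAmem : ∀ i : Fin d, cubeA d i ∈ P := fun i => hSd (Or.inl ⟨i, rfl⟩)
  have hBmem : ∀ i : Fin d, cubeB d i ∈ P := fun i => hSd (Or.inr ⟨i, rfl⟩)
  set A : Fin d → ↥P := fun i => ⟨cubeA d i, hAmem i⟩ with hAdef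
  set B : Fin d → ↥P := fun i => ⟨cubeB d i, hBmem i⟩ with hBdef
  have hAB : ∀ i j : Fin d, i ≠ j → A i ≤ B j := by
    intro i j hij
    intro k
    simp only [hAdef, hBdef, cubeA, cubeB]
    by_cases h : k = i
    · subst h
      simp [hij]
    · simp [h]
  have hAnB : ∀ i : Fin d, ¬ A i ≤ B i := by
    intro i h
    have h2 := h i
    simp [hAdef, hBdef, cubeA, cubeB] at h2
    exact absurd h2 (by simp)
  -- P is not all-true in some coordinate
  have hfalse : ∀ p : ↥P, ∃ k, (p : Fin d → Bool) k = false := by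
    intro p
    by_contra h
    push_neg at h
    apply hP p.2
    funext k
    have := h k
    simpa using this
  -- upper bound for P
  have memP : (d : Cardinal) ∈ _ :=
    dim_mem_of_embedding (α := ↥P) (β := fun _ : Fin d => Bool)
      (fun p i => (p : Fin d → Bool) i) (fun x y => Iff.rfl)
  -- upper bound for P × C
  have memPC : (d : Cardinal) ∈ _ :=
    dim_mem_of_embedding (α := ↥P × C) (β := fun _ : Fin d => Bool ×ₗ C)
      (fun pc i => toLex ((pc.1 : Fin d → Bool) i, pc.2))
      (by
        rintro ⟨p, c⟩ ⟨q, c'⟩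
        constructor
        · rintro ⟨hpq, hcc⟩ i
          rw [Prod.Lex.le_iff]
          rcases lt_or_eq_of_le (hpq i) with h | h
          · exact Or.inl h
          · exact Or.inr ⟨h, hcc⟩
        · intro h
          have hpq : p ≤ q := by
            intro i
            rcases Prod.Lex.le_iff.mp (h i) with h' | ⟨h', _⟩
            · exact h'.le
            · exact h'.le
          refine ⟨hpq, ?_⟩
          obtain ⟨k, hk⟩ := hfalse q
          have hpk : (p : Fin d → Bool) k = false := by
            have h2 := hpq k
            cases hb : (p : Fin d → Bool) k
            · rfl
            · rw [hb, hk] at h2; exact absurd h2 (by simp)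
          have h3 := Prod.Lex.le_iff.mp (h k)
          rw [hpk, hk] at h3
          rcases h3 with h' | ⟨_, h'⟩
          · exact absurd h' (lt_irrefl _)
          · exact h')
  have lowP := dim_lower A B hAB hAnB
  have lowPC := dim_lower (fun i => (A i, c₀)) (fun i => (B i, c₀))
    (fun i j hij => Prod.mk_le_mk.mpr ⟨hAB i j hij, le_refl _⟩)
    (fun i h => hAnB i (Prod.mk_le_mk.mp h).1)
  constructor
  · exact le_antisymm (csInf_le (OrderBot.bddBelow _) memPC)
      (le_csInf ⟨_, memPC⟩ lowPC)
  · exact le_antisymm (csInf_le (OrderBot.bddBelow _) memP)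
      (le_csInf ⟨_, memP⟩ lowP)
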